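/- Every continuous circuit-reversal equivalence class of continuous orientations of M contains exactly one σ-compatible continuous orientation. -/

import Mathlib

open Matrix

/-- A signed circuit of a real matrix `A`. -/
def IsCircuitR {r m : ℕ} (A : Matrix (Fin r) (Fin m) ℝ) (C : Fin m → ℝ) : Prop :=
  C ≠ 0 ∧ A.mulVec C = 0 ∧
    ∀ v : Fin m → ℝ, v ≠ 0 → A.mulVec v = 0 →
      {e | v e ≠ 0} ⊆ {e | C e ≠ 0} → {e | v e ≠ 0} = {e | C e ≠ 0}

/-- A continuous orientation: a function `E → [-1,1]`. -/
def ContOrientation {m : ℕ} (O : Fin m → ℝ) : Prop := ∀ e, O e ∈ Set.Icc (-1 : ℝ) 1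

/-- Compatibility with a signed circuit: `O(e) ≠ -sign(C(e))` on the support of `C`. -/
def CompatC {m : ℕ} (C O : Fin m → ℝ) : Prop := ∀ e, C e ≠ 0 → O e ≠ -Real.sign (C e)

/-- One continuous circuit reversal. -/
def ContReversal {r m : ℕ} (A : Matrix (Fin r) (Fin m) ℝ) (O O' : Fin m → ℝ) : Prop :=
  ∃ (C : Fin m → ℝ) (ε : ℝ), IsCircuitR A C ∧ 0 < ε ∧ CompatC C O ∧
    O' = O - ε • C ∧ ContOrientation O'

/-- Continuous circuit-reversal equivalence. -/
def ContEquiv {r m : ℕ} (A : Matrix (Fin r) (Fin m) ℝ) : (Fin m → ℝ) → (Fin m → ℝ) → Prop :=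
  Relation.EqvGen (ContReversal A)

/-- `O` is σ-compatible (for the acyclic signature induced by `w`): every signed circuit
compatible with `O` satisfies `w·C > 0`. -/
def SigmaCompat {r m : ℕ} (A : Matrix (Fin r) (Fin m) ℝ) (w : Fin m → ℝ)
    (O : Fin m → ℝ) : Prop :=
  ∀ C : Fin m → ℝ, IsCircuitR A C → CompatC C O → 0 < w ⬝ᵥ C

open Classical in
noncomputable def suppF {m : ℕ} (v : Fin m → ℝ) : Finset (Fin m) :=
  Finset.univ.filter (fun e => v e ≠ 0)

lemma mem_suppF {m : ℕ} (v : Fin m → ℝ) (e : Fin m) : e ∈ suppF v ↔ v e ≠ 0 := by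
  classical simp [suppF]

lemma circuit_neg {r m : ℕ} {A : Matrix (Fin r) (Fin m) ℝ} {C : Fin m → ℝ}
    (h : IsCircuitR A C) : IsCircuitR A (-C) := by
  obtain ⟨h0, hk, hmin⟩ := h
  refine ⟨neg_ne_zero.mpr h0, by simp [Matrix.mulVec_neg, hk], ?_⟩
  have hs : {e | (-C) e ≠ 0} = {e | C e ≠ 0} := by ext e; simp
  intro v hv hvk hsub
  rw [hs] at hsub ⊢
  exact hmin v hv hvk hsub

lemma contequiv_ker {r m : ℕ} {A : Matrix (Fin r) (Fin m) ℝ} {O O' : Fin m → ℝ}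
    (h : ContEquiv A O O') : A.mulVec (O' - O) = 0 := by
  induction h with
  | rel x y hxy =>
    obtain ⟨C, ε, hC, hε, _, heq, _⟩ := hxy
    subst heq
    have : x - ε • C - x = -(ε • C) := by ring
    rw [this, Matrix.mulVec_neg, Matrix.mulVec_smul, hC.2.1, smul_zero, neg_zero]
  | refl x => simp
  | symm x y _ ih =>
    have : x - y = -(y - x) := by ring
    rw [this, Matrix.mulVec_neg, ih, neg_zero]
  | trans x y z _ _ ih1 ih2 =>
    have : z - x = (y - x) + (z - y) := by ring
    rw [this, Matrix.mulVec_add, ih1, ih2, add_zero]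

lemma exists_circuit_subset {r m : ℕ} {A : Matrix (Fin r) (Fin m) ℝ} {d : Fin m → ℝ}
    (hd : d ≠ 0) (hk : A.mulVec d = 0) :
    ∃ C, IsCircuitR A C ∧ ∀ e, C e ≠ 0 → d e ≠ 0 := by
  classical
  set S : Set ℕ := {n | ∃ v : Fin m → ℝ, v ≠ 0 ∧ A.mulVec v = 0 ∧
      (∀ e, v e ≠ 0 → d e ≠ 0) ∧ (suppF v).card = n} with hS
  have hne : S.Nonempty := ⟨(suppF d).card, d, hd, hk, fun e h => h, rfl⟩
  obtain ⟨n, hn, hmin⟩ := Nat.lt_wfRel.wf.has_min S hne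
  obtain ⟨v, hv0, hvk, hvd, hvc⟩ := hn
  refine ⟨v, ⟨hv0, hvk, ?_⟩, hvd⟩
  intro u hu0 huk hsub
  have hsubF : suppF u ⊆ suppF v := by
    intro e he
    rw [mem_suppF] at he ⊢
    exact hsub he
  have hud : ∀ e, u e ≠ 0 → d e ≠ 0 := fun e h => hvd e (hsub h)
  have hcard : (suppF v).card ≤ (suppF u).card := by
    by_contra hlt
    push_neg at hlt
    rw [hvc] at hlt
    exact hmin _ ⟨u, hu0, huk, hud, rfl⟩ hlt
  have heq : suppF u = suppF v := Finset.eq_of_subset_of_card_le hsubF hcard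
  ext e
  constructor
  · intro h; exact hsub h
  · intro h
    have : e ∈ suppF v := (mem_suppF v e).mpr h
    rw [← heq] at this
    exact (mem_suppF u e).mp this

lemma div_pos_of_mul_pos' {a b : ℝ} (h : 0 < a * b) : 0 < b / a := by
  rcases lt_trichotomy a 0 with h1|h1|h1
  · have hb : b < 0 := by nlinarith
    exact div_pos_of_neg_of_neg hb h1
  · simp [h1] at h
  · have hb : 0 < b := by nlinarith
    exact div_pos hb h1

lemma exists_conformal_circuit_aux {r m : ℕ} {A : Matrix (Fin r) (Fin m) ℝ} :
    ∀ n (d : Fin m → ℝ), (suppF d).card ≤ n → d ≠ 0 → A.mulVec d = 0 →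
    ∃ C, IsCircuitR A C ∧ ∀ e, C e ≠ 0 → 0 < C e * d e := by
  intro n
  induction n with
  | zero =>
    intro d hc hd _
    exfalso
    apply hd
    funext e
    by_contra he
    have : e ∈ suppF d := (mem_suppF d e).mpr he
    have := Finset.card_pos.mpr ⟨e, this⟩
    omega
  | succ n ih =>
    intro d hc hd hk
    obtain ⟨C, hC, hCd⟩ := exists_circuit_subset hd hk
    by_cases hpos : ∀ e, C e ≠ 0 → 0 < C e * d e
    · exact ⟨C, hC, hpos⟩
    push_neg at hpos
    obtain ⟨e0, he0, he0p⟩ := hpos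
    have he0d : d e0 ≠ 0 := hCd e0 he0
    have he0neg : C e0 * d e0 < 0 :=
      lt_of_le_of_ne he0p (mul_ne_zero he0 he0d)
    by_cases hmx : ∃ e1, C e1 ≠ 0 ∧ 0 < C e1 * d e1
    · obtain ⟨e1, he1, he1p⟩ := hmx
      classical
      set T : Finset (Fin m) := (suppF C).filter (fun e => 0 < C e * d e) with hT
      have hTne : T.Nonempty := ⟨e1, by simp [hT, mem_suppF, he1, he1p]⟩
      set t : ℝ := T.inf' hTne (fun e => d e / C e) with ht
      have hratio : ∀ e ∈ T, 0 < d e / C e := by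
        intro e he
        rw [hT, Finset.mem_filter] at he
        exact div_pos_of_mul_pos' he.2
      have htpos : 0 < t := by
        rw [ht]
        obtain ⟨e2, he2, heq⟩ := Finset.exists_mem_eq_inf' hTne (fun e => d e / C e)
        rw [heq]; exact hratio e2 he2
      have htle : ∀ e ∈ T, t ≤ d e / C e := fun e he => Finset.inf'_le _ he
      set d' : Fin m → ℝ := d - t • C with hd'
      have hd'e : ∀ e, d' e = d e - t * C e := fun e => rfl
      -- sign claim
      have hsign : ∀ e, d' e ≠ 0 → 0 < d' e * d e := by
        intro e hne
        by_cases hce : C e = 0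
        · have : d' e = d e := by rw [hd'e, hce]; ring
          rw [this] at hne ⊢
          have : (0:ℝ) < d e ^ 2 := by positivity
          nlinarith
        · have hde : d e ≠ 0 := hCd e hce
          by_cases hp : 0 < C e * d e
          · have heT : e ∈ T := by simp [hT, mem_suppF, hce, hp]
            have h1 : t ≤ d e / C e := htle e heT
            have h2 : d' e = C e * (d e / C e - t) := by
              rw [hd'e]; field_simp
            have h3 : d e / C e - t ≠ 0 := by
              intro h
              rw [h2, h] at hne; simp at hne
            have h4 : 0 < d e / C e - t := lt_of_le_of_ne (by linarith) (Ne.symm h3)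
            rw [h2]
            calc (0:ℝ) < (C e * d e) * (d e / C e - t) := mul_pos hp h4
              _ = C e * (d e / C e - t) * d e := by ring
          · have hp' : C e * d e < 0 :=
              lt_of_le_of_ne (not_lt.mp hp) (mul_ne_zero hce hde)
            rw [hd'e]
            have : (0:ℝ) < d e ^ 2 := by positivity
            nlinarith
      -- kernel
      have hd'k : A.mulVec d' = 0 := by
        rw [hd', Matrix.mulVec_sub, Matrix.mulVec_smul, hk, hC.2.1, smul_zero, sub_zero]
      -- d' nonzero
      have hd'0 : d' ≠ 0 := by
        intro h
        have : d' e0 = 0 := by rw [h]; rfl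
        rw [hd'e] at this
        have hc2 : (0:ℝ) < C e0 ^ 2 := by positivity
        have hde0 : d e0 = t * C e0 := by linarith
        rw [hde0] at he0neg
        nlinarith [mul_pos htpos hc2]
      -- support shrinks
      obtain ⟨estar, hestar, heqstar⟩ := Finset.exists_mem_eq_inf' hTne (fun e => d e / C e)
      have hCes : C estar ≠ 0 := by
        rw [hT, Finset.mem_filter, mem_suppF] at hestar
        exact hestar.1
      have hd'star : d' estar = 0 := by
        rw [hd'e, ht, heqstar]
        field_simp; ring
      have hdstar : d estar ≠ 0 := hCd estar hCes
      have hsub : suppF d' ⊆ suppF d := by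
        intro e he
        rw [mem_suppF] at he ⊢
        intro h
        have := hsign e he
        rw [h, mul_zero] at this
        exact lt_irrefl 0 this
      have hss : suppF d' ⊂ suppF d := by
        refine Finset.ssubset_iff_of_subset hsub |>.mpr ⟨estar, ?_, ?_⟩
        · exact (mem_suppF d estar).mpr hdstar
        · rw [mem_suppF]; simp [hd'star]
      have hcard' : (suppF d').card ≤ n := by
        have := Finset.card_lt_card hss
        omega
      obtain ⟨C', hC', hconf⟩ := ih d' hcard' hd'0 hd'k
      refine ⟨C', hC', ?_⟩
      intro e hCe
      have hp := hconf e hCe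
      have hd'ne : d' e ≠ 0 := by
        intro h; rw [h, mul_zero] at hp; exact lt_irrefl 0 hp
      have hs := hsign e hd'ne
      have h2 : (0:ℝ) < d' e ^ 2 := by positivity
      nlinarith [mul_pos hp hs]
    · push_neg at hmx
      refine ⟨-C, circuit_neg hC, ?_⟩
      intro e he
      have hce : C e ≠ 0 := by simpa using he
      have hde : d e ≠ 0 := hCd e hce
      have : C e * d e < 0 :=
        lt_of_le_of_ne (hmx e hce) (mul_ne_zero hce hde)
      have : (0:ℝ) < -(C e * d e) := by linarith
      calc (0:ℝ) < -(C e * d e) := this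
        _ = (-C) e * d e := by show -(C e * d e) = -C e * d e; ring

lemma reach {r m : ℕ} {A : Matrix (Fin r) (Fin m) ℝ} :
    ∀ n (O d : Fin m → ℝ), (suppF d).card ≤ n → A.mulVec d = 0 →
    ContOrientation O → ContOrientation (O + d) → ContEquiv A O (O + d) := by
  intro n
  induction n with
  | zero =>
    intro O d hc _ _ _
    have hd0 : d = 0 := by
      funext e
      by_contra he
      have : e ∈ suppF d := (mem_suppF d e).mpr he
      have := Finset.card_pos.mpr ⟨e, this⟩
      omega
    rw [hd0, add_zero]
    exact Relation.EqvGen.refl O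
  | succ n ih =>
    intro O d hc hk hO hOd
    by_cases hd0 : d = 0
    · rw [hd0, add_zero]; exact Relation.EqvGen.refl O
    obtain ⟨C, hC, hconf⟩ := exists_conformal_circuit_aux (n+1) d hc hd0 hk
    classical
    have hTne : (suppF C).Nonempty := by
      obtain ⟨e, he⟩ := Function.ne_iff.mp hC.1
      exact ⟨e, (mem_suppF C e).mpr (by simpa using he)⟩
    set t : ℝ := (suppF C).inf' hTne (fun e => d e / C e) with ht
    have hratio : ∀ e ∈ suppF C, 0 < d e / C e := by
      intro e he
      exact div_pos_of_mul_pos' (hconf e ((mem_suppF C e).mp he))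
    have htpos : 0 < t := by
      rw [ht]
      obtain ⟨e2, he2, heq⟩ := Finset.exists_mem_eq_inf' hTne (fun e => d e / C e)
      rw [heq]; exact hratio e2 he2
    have htle : ∀ e, C e ≠ 0 → t ≤ d e / C e := fun e he =>
      Finset.inf'_le _ ((mem_suppF C e).mpr he)
    -- t • C is between 0 and d, coordinatewise
    have hbetween : ∀ e, (0 ≤ t * C e ∧ t * C e ≤ d e) ∨ (d e ≤ t * C e ∧ t * C e ≤ 0) := by
      intro e
      rcases lt_trichotomy (C e) 0 with hce | hce | hce
      · right
        have hprod := hconf e (ne_of_lt hce)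
        have hde : d e < 0 := by nlinarith
        have h1 := htle e (ne_of_lt hce)
        constructor
        · exact (le_div_iff_of_neg hce).mp h1
        · nlinarith
      · rcases le_or_gt 0 (d e) with h | h
        · left; rw [hce]; constructor <;> simp [h]
        · right; rw [hce]; constructor <;> simp [le_of_lt h]
      · left
        have hprod := hconf e (ne_of_gt hce)
        have hde : 0 < d e := by nlinarith
        have h1 := htle e (ne_of_gt hce)
        constructor
        · positivity
        · exact (le_div_iff₀ hce).mp h1
    set O1 : Fin m → ℝ := O + t • C with hO1
    have hO1e : ∀ e, O1 e = O e + t * C e := fun e => rfl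
    have hOde : ∀ e, (O + d) e = O e + d e := fun e => rfl
    have hO1or : ContOrientation O1 := by
      intro e
      have h1 := hO e
      have h2 := hOd e
      rw [hOde] at h2
      rw [hO1e]
      rcases hbetween e with ⟨ha, hb⟩ | ⟨ha, hb⟩ <;>
        exact ⟨by simp at h1 h2 ⊢; linarith [h1.1, h2.1], by simp at h1 h2 ⊢; linarith [h1.2, h2.2]⟩
    have hrev : ContReversal A O O1 := by
      refine ⟨-C, t, circuit_neg hC, htpos, ?_, ?_, hO1or⟩
      · intro e he
        have hce : C e ≠ 0 := by simpa using he
        have hsgn : -Real.sign ((-C) e) = Real.sign (C e) := by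
          show -Real.sign (-C e) = _
          rw [Real.sign_neg, neg_neg]
        rw [hsgn]
        have h2 := hOd e
        rw [hOde] at h2
        rcases lt_trichotomy (C e) 0 with h | h | h
        · rw [Real.sign_of_neg h]
          have hprod := hconf e hce
          have hde : d e < 0 := by nlinarith
          have := h2.1
          intro heq
          rw [heq] at this
          linarith
        · exact absurd h hce
        · rw [Real.sign_of_pos h]
          have hprod := hconf e hce
          have hde : 0 < d e := by nlinarith
          have := h2.2
          intro heq
          rw [heq] at this
          linarith
      · rw [hO1, smul_neg, sub_neg_eq_add]
    -- the remainder
    set d' : Fin m → ℝ := d - t • C with hd'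
    have hd'e : ∀ e, d' e = d e - t * C e := fun e => rfl
    have hd'k : A.mulVec d' = 0 := by
      rw [hd', Matrix.mulVec_sub, Matrix.mulVec_smul, hk, hC.2.1, smul_zero, sub_zero]
    obtain ⟨estar, hestar, heqstar⟩ := Finset.exists_mem_eq_inf' hTne (fun e => d e / C e)
    have hCes : C estar ≠ 0 := (mem_suppF C estar).mp hestar
    have hd'star : d' estar = 0 := by
      rw [hd'e, ht, heqstar]
      field_simp; ring
    have hdstar : d estar ≠ 0 := by
      intro h
      have := hconf estar hCes
      rw [h, mul_zero] at this
      exact lt_irrefl 0 this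
    have hsub : suppF d' ⊆ suppF d := by
      intro e he
      rw [mem_suppF] at he ⊢
      rw [hd'e] at he
      intro h
      by_cases hce : C e = 0
      · rw [h, hce] at he; simp at he
      · exact hdstar (by
          exfalso
          have := hconf e hce
          rw [h, mul_zero] at this
          exact lt_irrefl 0 this)
    have hss : suppF d' ⊂ suppF d := by
      refine Finset.ssubset_iff_of_subset hsub |>.mpr ⟨estar, ?_, ?_⟩
      · exact (mem_suppF d estar).mpr hdstar
      · rw [mem_suppF]; simp [hd'star]
    have hcard' : (suppF d').card ≤ n := by
      have := Finset.card_lt_card hss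
      omega
    have hsum : O1 + d' = O + d := by
      rw [hO1, hd']; abel
    have hOd' : ContOrientation (O1 + d') := by rw [hsum]; exact hOd
    have hrest := ih O1 d' hcard' hd'k hO1or hOd'
    rw [hsum] at hrest
    exact Relation.EqvGen.trans _ _ _ (Relation.EqvGen.rel _ _ hrev) hrest

/-- Every continuous circuit-reversal equivalence class of continuous orientations
contains exactly one σ-compatible continuous orientation. -/
theorem stmt3 {r m : ℕ} (A : Matrix (Fin r) (Fin m) ℝ) (hrank : A.rank = r)
    (w : Fin m → ℝ) (hw : ∀ C : Fin m → ℝ, IsCircuitR A C → w ⬝ᵥ C ≠ 0)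
    (O : Fin m → ℝ) (hO : ContOrientation O) :
    ∃! O' : Fin m → ℝ, ContOrientation O' ∧ SigmaCompat A w O' ∧ ContEquiv A O O' := by
  classical
  set P : Set (Fin m → ℝ) := {x | ContOrientation x ∧ A.mulVec (x - O) = 0} with hP
  have hPne : P.Nonempty := ⟨O, hO, by simp⟩
  have hmvc : Continuous (fun x : Fin m → ℝ => A.mulVec (x - O)) := by
    have h1 : Continuous (fun x : Fin m → ℝ => A.mulVec x) :=
      LinearMap.continuous_of_finiteDimensional A.mulVecLin
    exact h1.comp (continuous_id.sub continuous_const)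
  have hPcomp : IsCompact P := by
    have h1 : IsCompact (Set.pi Set.univ fun _ : Fin m => Set.Icc (-1:ℝ) 1) :=
      isCompact_univ_pi (fun _ => isCompact_Icc)
    have h2 : IsClosed {x : Fin m → ℝ | A.mulVec (x - O) = 0} := by
      have : {x : Fin m → ℝ | A.mulVec (x - O) = 0} =
          (fun x : Fin m → ℝ => A.mulVec (x - O)) ⁻¹' {0} := by ext x; simp
      rw [this]
      exact IsClosed.preimage hmvc isClosed_singleton
    have hPeq : P = (Set.pi Set.univ fun _ : Fin m => Set.Icc (-1:ℝ) 1) ∩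
        {x : Fin m → ℝ | A.mulVec (x - O) = 0} := by
      ext x
      constructor
      · rintro ⟨ho, hk⟩
        exact ⟨Set.mem_univ_pi.mpr ho, hk⟩
      · rintro ⟨ho, hk⟩
        exact ⟨Set.mem_univ_pi.mp ho, hk⟩
    rw [hPeq]
    exact h1.inter_right h2
  have hwc : Continuous (fun x : Fin m → ℝ => w ⬝ᵥ x) := by
    show Continuous fun x : Fin m → ℝ => ∑ i, w i * x i
    exact continuous_finset_sum _ fun i _ => continuous_const.mul (continuous_apply i)
  obtain ⟨Os, hOsP, hmax⟩ := hPcomp.exists_isMaxOn hPne hwc.continuousOn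
  have hOsor : ContOrientation Os := hOsP.1
  have hOsker : A.mulVec (Os - O) = 0 := hOsP.2
  -- Os is sigma-compatible
  have hOssig : SigmaCompat A w Os := by
    intro C hC hcomp
    set δ : Fin m → ℝ := fun e =>
      if 0 < C e then (Os e + 1) / C e else if C e < 0 then (1 - Os e) / (-C e) else 1
      with hδdef
    have hδ : ∀ e, 0 < δ e := by
      intro e
      rw [hδdef]
      rcases lt_trichotomy (C e) 0 with h | h | h
      · simp only [if_neg (by linarith : ¬ 0 < C e), if_pos h]
        have hne := hcomp e (ne_of_lt h)
        rw [Real.sign_of_neg h] at hne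
        have h1 := (hOsor e).2
        have h2 : Os e < 1 := lt_of_le_of_ne h1 (by simpa using hne)
        exact div_pos (by linarith) (by linarith)
      · simp [h]
      · simp only [if_pos h]
        have hne := hcomp e (ne_of_gt h)
        rw [Real.sign_of_pos h] at hne
        have h1 := (hOsor e).1
        have h2 : -1 < Os e := lt_of_le_of_ne h1 (Ne.symm hne)
        exact div_pos (by linarith) h
    have hnem : Nonempty (Fin m) := by
      obtain ⟨e, _⟩ := Function.ne_iff.mp hC.1
      exact ⟨e⟩
    set ε : ℝ := Finset.univ.inf' Finset.univ_nonempty δ with hε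
    have hεpos : 0 < ε := by
      rw [hε]
      obtain ⟨e2, _, heq⟩ := Finset.exists_mem_eq_inf' Finset.univ_nonempty δ
      rw [heq]; exact hδ e2
    have hεle : ∀ e, ε ≤ δ e := fun e => Finset.inf'_le _ (Finset.mem_univ e)
    set x : Fin m → ℝ := Os - ε • C with hx
    have hxe : ∀ e, x e = Os e - ε * C e := fun e => rfl
    have hxP : x ∈ P := by
      constructor
      · intro e
        have h1 := hOsor e
        have h2 := hεle e
        rw [hxe]
        rcases lt_trichotomy (C e) 0 with h | h | h
        · rw [hδdef] at h2
          simp only [if_neg (by linarith : ¬ 0 < C e), if_pos h] at h2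
          have h3 : ε * (-C e) ≤ 1 - Os e := (le_div_iff₀ (by linarith)).mp h2
          constructor
          · have : 0 < ε * (-C e) := mul_pos hεpos (by linarith)
            linarith [h1.1]
          · linarith
        · rw [h]; simpa using h1
        · rw [hδdef] at h2
          simp only [if_pos h] at h2
          have h3 : ε * C e ≤ Os e + 1 := (le_div_iff₀ h).mp h2
          constructor
          · linarith
          · have : 0 < ε * C e := mul_pos hεpos h
            linarith [h1.2]
      · show A.mulVec (x - O) = 0
        have : x - O = (Os - O) - ε • C := by rw [hx]; abel
        rw [this, Matrix.mulVec_sub, Matrix.mulVec_smul, hOsker, hC.2.1, smul_zero, sub_zero]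
    have hle : w ⬝ᵥ x ≤ w ⬝ᵥ Os := hmax hxP
    have hdot : w ⬝ᵥ x = w ⬝ᵥ Os - ε * (w ⬝ᵥ C) := by
      rw [hx]
      simp [dotProduct_sub, dotProduct_smul, smul_eq_mul]
    rw [hdot] at hle
    have hge : 0 ≤ w ⬝ᵥ C := by
      by_contra hlt
      push_neg at hlt
      nlinarith [mul_pos hεpos (neg_pos.mpr hlt)]
    exact lt_of_le_of_ne hge (Ne.symm (hw C hC))
  -- Os is equivalent to O
  have hOsequiv : ContEquiv A O Os := by
    have h1 := reach (A := A) (suppF (Os - O)).card O (Os - O) le_rfl hOsker hO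
      (by rw [add_sub_cancel]; exact hOsor)
    rwa [add_sub_cancel] at h1
  refine ⟨Os, ⟨hOsor, hOssig, hOsequiv⟩, ?_⟩
  -- uniqueness
  rintro O2 ⟨hO2or, hO2sig, hO2equiv⟩
  by_contra hne
  have hdne : O2 - Os ≠ 0 := sub_ne_zero.mpr hne
  have hdker : A.mulVec (O2 - Os) = 0 :=
    contequiv_ker (Relation.EqvGen.trans _ _ _
      (Relation.EqvGen.symm _ _ hOsequiv) hO2equiv)
  obtain ⟨C, hC, hconf⟩ := exists_conformal_circuit_aux (suppF (O2 - Os)).card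
    (O2 - Os) le_rfl hdne hdker
  have hde : ∀ e, (O2 - Os) e = O2 e - Os e := fun e => rfl
  have hcomp2 : CompatC C O2 := by
    intro e he
    have hprod := hconf e he
    rw [hde] at hprod
    rcases lt_trichotomy (C e) 0 with h | h | h
    · rw [Real.sign_of_neg h]
      have hd : O2 e - Os e < 0 := by nlinarith
      have := (hOsor e).2
      intro heq
      rw [heq] at hd
      simp at hd
      linarith
    · exact absurd h he
    · rw [Real.sign_of_pos h]
      have hd : 0 < O2 e - Os e := by nlinarith
      have := (hOsor e).1
      intro heq
      rw [heq] at hd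
      linarith
  have hcomps : CompatC (-C) Os := by
    intro e he
    have hce : C e ≠ 0 := by simpa using he
    have hprod := hconf e hce
    rw [hde] at hprod
    have hsgn : -Real.sign ((-C) e) = Real.sign (C e) := by
      show -Real.sign (-C e) = _
      rw [Real.sign_neg, neg_neg]
    rw [hsgn]
    rcases lt_trichotomy (C e) 0 with h | h | h
    · rw [Real.sign_of_neg h]
      have hd : O2 e - Os e < 0 := by nlinarith
      have := (hO2or e).1
      intro heq
      rw [heq] at hd
      linarith
    · exact absurd h hce
    · rw [Real.sign_of_pos h]
      have hd : 0 < O2 e - Os e := by nlinarith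
      have := (hO2or e).2
      intro heq
      rw [heq] at hd
      linarith
  have h1 := hO2sig C hC hcomp2
  have h2 := hOssig (-C) (circuit_neg hC) hcomps
  rw [dotProduct_neg] at h2
  linarith
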